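/- Let g(z) = z(exp(z) − 1)/(exp(z) − z − 1) for z > 0. Then g(z) → 2 as z → 0+, g(z) → ∞ as z → ∞, and for every real r > 0 there exists exactly one z > 0 such that g(z) = 2 + r. -/
import Mathlib

open Real Filter Set Topology

private lemma ks_denom_pos {z : ℝ} (hz : 0 < z) : 0 < Real.exp z - z - 1 := by
  have := Real.add_one_lt_exp (ne_of_gt hz)
  linarith

private lemma ks_num_deriv (z : ℝ) :
    HasDerivAt (fun z : ℝ => z * (Real.exp z - 1))
      (1 * (Real.exp z - 1) + z * Real.exp z) z :=
  (hasDerivAt_id z).mul ((Real.hasDerivAt_exp z).sub_const 1)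

private lemma ks_den_deriv (z : ℝ) :
    HasDerivAt (fun z : ℝ => Real.exp z - z - 1) (Real.exp z - 1) z := by
  have h := ((Real.hasDerivAt_exp z).sub (hasDerivAt_id z)).sub_const 1
  simpa using h

private lemma ks_key {z : ℝ} (hz : 0 < z) :
    z ^ 2 * Real.exp z < (Real.exp z - 1) ^ 2 := by
  set s := Real.exp (z / 2) with hs
  have hsp : 0 < s := Real.exp_pos _
  have hss : s * s = Real.exp z := by
    rw [hs, ← Real.exp_add]; ring_nf
  have hsinh : z / 2 < Real.sinh (z / 2) := Real.self_lt_sinh_iff.2 (by linarith)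
  have hsinh' : Real.sinh (z / 2) = (s - (Real.exp (-(z / 2)))) / 2 := by
    rw [Real.sinh_eq]
  have hinv : Real.exp (-(z / 2)) = s⁻¹ := by rw [Real.exp_neg, hs]
  have h1 : z < s - s⁻¹ := by
    rw [hsinh', hinv] at hsinh; linarith
  have h2 : s * s⁻¹ = 1 := mul_inv_cancel₀ (ne_of_gt hsp)
  have h3 : z * s < s * s - 1 := by
    have := mul_lt_mul_of_pos_left h1 hsp
    calc z * s = s * z := by ring
    _ < s * (s - s⁻¹) := this
    _ = s * s - 1 := by rw [mul_sub, h2]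
  have h4 : 0 < z * s := mul_pos hz hsp
  have hE : 1 < Real.exp z := by rw [← hss]; nlinarith
  nlinarith [sq_nonneg (s * s - 1 - z * s), sq_nonneg (s*s - 1 + z * s)]

private lemma ks_hasDeriv {z : ℝ} (hz : 0 < z) :
    HasDerivAt (fun z : ℝ => z * (Real.exp z - 1) / (Real.exp z - z - 1))
      (((1 * (Real.exp z - 1) + z * Real.exp z) * (Real.exp z - z - 1)
        - z * (Real.exp z - 1) * (Real.exp z - 1)) / (Real.exp z - z - 1) ^ 2) z :=
  (ks_num_deriv z).div (ks_den_deriv z) (ne_of_gt (ks_denom_pos hz))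

private lemma ks_strictMono :
    StrictMonoOn (fun z : ℝ => z * (Real.exp z - 1) / (Real.exp z - z - 1)) (Set.Ioi 0) := by
  apply strictMonoOn_of_deriv_pos (convex_Ioi 0)
  · intro z hz
    exact ((ks_hasDeriv hz).continuousAt).continuousWithinAt
  · intro z hz
    rw [interior_Ioi] at hz
    rw [(ks_hasDeriv hz).deriv]
    apply div_pos
    · have := ks_key hz
      nlinarith
    · exact pow_pos (ks_denom_pos hz) 2

private lemma ks_tendsto_zero :
    Filter.Tendsto (fun z : ℝ => z * (Real.exp z - 1) / (Real.exp z - z - 1))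
      (𝓝[>] (0 : ℝ)) (𝓝 2) := by
  apply HasDerivAt.lhopital_zero_nhdsGT
    (f' := fun z => 1 * (Real.exp z - 1) + z * Real.exp z)
    (g' := fun z => Real.exp z - 1)
  · exact Filter.Eventually.of_forall fun z => ks_num_deriv z
  · exact Filter.Eventually.of_forall fun z => ks_den_deriv z
  · filter_upwards [self_mem_nhdsWithin] with z hz
    have hz' : 0 < z := hz
    have := Real.add_one_lt_exp (ne_of_gt hz')
    linarith
  · have : Continuous (fun z : ℝ => z * (Real.exp z - 1)) := by continuity
    have h := (this.tendsto 0).mono_left (nhdsWithin_le_nhds (s := Set.Ioi 0))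
    simpa using h
  · have : Continuous (fun z : ℝ => Real.exp z - z - 1) := by continuity
    have h := (this.tendsto 0).mono_left (nhdsWithin_le_nhds (s := Set.Ioi 0))
    simpa using h
  · -- (1*(E-1) + zE)/(E-1) → 2
    have hslope : Filter.Tendsto (fun z : ℝ => (Real.exp z - 1) / z) (𝓝[>] (0:ℝ)) (𝓝 1) := by
      have h := (Real.hasDerivAt_exp 0)
      rw [hasDerivAt_iff_tendsto_slope] at h
      have h2 : Filter.Tendsto (slope Real.exp 0) (𝓝[>] (0:ℝ)) (𝓝 (Real.exp 0)) :=
        h.mono_left (nhdsWithin_mono _ (fun x hx => ne_of_gt hx))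
      rw [Real.exp_zero] at h2
      refine h2.congr' ?_
      filter_upwards [self_mem_nhdsWithin] with z hz
      simp [slope_def_field]
    have hinv : Filter.Tendsto (fun z : ℝ => z / (Real.exp z - 1)) (𝓝[>] (0:ℝ)) (𝓝 1) := by
      have h := hslope.inv₀ one_ne_zero
      simp only [inv_one] at h
      refine h.congr' ?_
      filter_upwards with z
      rw [← one_div, one_div_div]
    have hexp : Filter.Tendsto (fun z : ℝ => Real.exp z) (𝓝[>] (0:ℝ)) (𝓝 1) := by
      have h := (Real.continuous_exp.tendsto 0).mono_left (nhdsWithin_le_nhds (s := Set.Ioi 0))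
      simpa using h
    have hmain : Filter.Tendsto (fun z : ℝ => 1 + z / (Real.exp z - 1) * Real.exp z)
        (𝓝[>] (0:ℝ)) (𝓝 2) := by
      have := (tendsto_const_nhds (x := (1:ℝ)) (f := 𝓝[>] (0:ℝ))).add (hinv.mul hexp)
      norm_num at this
      convert this using 2
    refine hmain.congr' ?_
    filter_upwards [self_mem_nhdsWithin] with z hz
    have hz' : 0 < z := hz
    have hE1 : Real.exp z - 1 ≠ 0 := by
      have := Real.add_one_lt_exp (ne_of_gt hz'); intro h; linarith
    field_simp

/-- For `g z = z (exp z - 1) / (exp z - z - 1)` on `(0, ∞)`: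
`g z → 2` as `z → 0⁺`, `g z → ∞` as `z → ∞`, and for every `r > 0` there is exactly
one `z > 0` with `g z = 2 + r`. -/
theorem karpSipser_g_limits_and_unique_solution :
    Filter.Tendsto (fun z : ℝ => z * (Real.exp z - 1) / (Real.exp z - z - 1))
      (𝓝[>] (0 : ℝ)) (𝓝 2) ∧
    Filter.Tendsto (fun z : ℝ => z * (Real.exp z - 1) / (Real.exp z - z - 1))
      Filter.atTop Filter.atTop ∧
    ∀ r : ℝ, 0 < r →
      ∃! z : ℝ, 0 < z ∧ z * (Real.exp z - 1) / (Real.exp z - z - 1) = 2 + r := by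
  set g : ℝ → ℝ := fun z => z * (Real.exp z - 1) / (Real.exp z - z - 1) with hg
  have hcont : ∀ z : ℝ, 0 < z → ContinuousAt g z := fun z hz => (ks_hasDeriv hz).continuousAt
  have hatTop : Filter.Tendsto g Filter.atTop Filter.atTop := by
    apply tendsto_atTop_mono' _ (f₁ := fun z : ℝ => z / 2)
    · filter_upwards [Filter.eventually_ge_atTop (1:ℝ)] with z hz
      have hz0 : 0 < z := by linarith
      have hd := ks_denom_pos hz0
      have hE := Real.add_one_lt_exp (ne_of_gt hz0)
      rw [hg]
      rw [div_le_div_iff₀ (by norm_num) hd]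
      nlinarith
    · exact Filter.Tendsto.atTop_div_const (by norm_num) tendsto_id
  refine ⟨ks_tendsto_zero, hatTop, ?_⟩
  intro r hr
  -- find a with g a < 2 + r
  have ha : ∃ a : ℝ, 0 < a ∧ g a < 2 + r := by
    have h1 : ∀ᶠ z in 𝓝[>] (0:ℝ), g z < 2 + r :=
      ks_tendsto_zero.eventually_lt_const (by linarith)
    have h2 := h1.and self_mem_nhdsWithin
    obtain ⟨a, hga, ha⟩ := h2.exists
    exact ⟨a, ha, hga⟩
  obtain ⟨a, ha0, hga⟩ := ha
  have hb : ∃ b : ℝ, a < b ∧ 2 + r < g b := by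
    have h1 : ∀ᶠ z in Filter.atTop, 2 + r < g z := hatTop.eventually_gt_atTop (2 + r)
    have h2 := h1.and (Filter.eventually_gt_atTop a)
    obtain ⟨b, hgb, hab⟩ := h2.exists
    exact ⟨b, hab, hgb⟩
  obtain ⟨b, hab, hgb⟩ := hb
  have hcontOn : ContinuousOn g (Set.Icc a b) := fun z hz =>
    (hcont z (lt_of_lt_of_le ha0 hz.1)).continuousWithinAt
  have hivt := intermediate_value_Icc (le_of_lt hab) hcontOn
  have hmem : (2 + r) ∈ Set.Icc (g a) (g b) := ⟨le_of_lt hga, le_of_lt hgb⟩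
  obtain ⟨z, hz, hgz⟩ := hivt hmem
  have hz0 : 0 < z := lt_of_lt_of_le ha0 hz.1
  refine ⟨z, ⟨hz0, hgz⟩, ?_⟩
  intro y hy
  exact ks_strictMono.injOn hy.1 hz0 (hy.2.trans hgz.symm)
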